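/- Let X and W be random vectors (possibly dependent) and Y a random vector such that for a class of thrice-differentiable functions h: ℝ^p → ℝ with M₂(h) = sup_z ∑_{r,s}|∂_r∂_s h(z)| ≤ Cβ² and M₃(h) = sup_z ∑_{r,s,u}|∂_r∂_s∂_u h(z)| ≤ Cβ³, one has |E h(W) − E h(Y)| ≤ A·β² + B·β³ for constants A, B. If additionally Y satisfies the Gaussian anti-concentration property sup_z P(|max_r Y_r − z| ≤ ε) ≤ Cε√(log p) for all ε > 0, and for each t there is h_β with 1{max_r z_r ≤ t} ≤ h_β(z) ≤ 1{max_r z_r ≤ t + (log p + 1)/β}, then sup_t |P(max_r W_r ≤ t) − P(max_r Y_r ≤ t)| ≤ C'(Aβ² + Bβ³ + (log p + 1)√(log p)/β) for a constant C'. -/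

import Mathlib

open MeasureTheory Real

/-- Second partial derivative `∂_r ∂_s h` at `z`. -/
noncomputable def d2 {p : ℕ} (h : (Fin p → ℝ) → ℝ) (z : Fin p → ℝ) (r s : Fin p) : ℝ :=
  fderiv ℝ (fun y => fderiv ℝ h y (Pi.single s 1)) z (Pi.single r 1)

/-- Third partial derivative `∂_u ∂_s ∂_r h` at `z`. -/
noncomputable def d3 {p : ℕ} (h : (Fin p → ℝ) → ℝ) (z : Fin p → ℝ) (r s u : Fin p) : ℝ :=
  fderiv ℝ (fun y => d2 h y r s) z (Pi.single u 1)

/-- Maximum coordinate of a vector in `ℝ^p`. -/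
noncomputable def maxCoord {p : ℕ} [NeZero p] (v : Fin p → ℝ) : ℝ :=
  Finset.univ.sup' Finset.univ_nonempty v

section Aux
set_option linter.unusedSectionVars false

variable {Ω : Type*} [MeasurableSpace Ω] {μ : Measure Ω} [IsProbabilityMeasure μ]
variable {p : ℕ} [NeZero p]

lemma measSet (X : Ω → Fin p → ℝ) (hX : Measurable X) (t : ℝ) :
    MeasurableSet {ω | maxCoord (X ω) ≤ t} := by
  have : {ω | maxCoord (X ω) ≤ t} = ⋂ r, {ω | X ω r ≤ t} := by
    ext ω; simp [maxCoord, Finset.sup'_le_iff]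
  rw [this]
  exact MeasurableSet.iInter fun r =>
    measurableSet_le ((measurable_pi_apply r).comp hX) measurable_const

lemma indic_int (X : Ω → Fin p → ℝ) (hX : Measurable X) (t : ℝ) :
    ∫ ω, Set.indicator {y : Fin p → ℝ | maxCoord y ≤ t} (fun _ => (1:ℝ)) (X ω) ∂μ
      = (μ {ω | maxCoord (X ω) ≤ t}).toReal := by
  have h1 : ∀ ω, Set.indicator {y : Fin p → ℝ | maxCoord y ≤ t} (fun _ => (1:ℝ)) (X ω)
      = Set.indicator {ω | maxCoord (X ω) ≤ t} (fun _ => (1:ℝ)) ω := by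
    intro ω
    by_cases h : maxCoord (X ω) ≤ t <;> simp [Set.indicator, h]
  simp_rw [h1]
  have := MeasureTheory.integral_indicator_one (μ := μ) (measSet X hX t)
  exact this

lemma indic_integrable (X : Ω → Fin p → ℝ) (hX : Measurable X) (t : ℝ) :
    Integrable (fun ω => Set.indicator {y : Fin p → ℝ | maxCoord y ≤ t} (fun _ => (1:ℝ)) (X ω)) μ := by
  have h1 : (fun ω => Set.indicator {y : Fin p → ℝ | maxCoord y ≤ t} (fun _ => (1:ℝ)) (X ω))
      = Set.indicator {ω | maxCoord (X ω) ≤ t} (fun _ => (1:ℝ)) := by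
    ext ω; by_cases h : maxCoord (X ω) ≤ t <;> simp [Set.indicator, h]
  rw [h1]
  exact (integrable_const 1).indicator (measSet X hX t)

lemma h_integrable (X : Ω → Fin p → ℝ) (hX : Measurable X) (h : (Fin p → ℝ) → ℝ)
    (hc : Continuous h) (h0 : ∀ z, 0 ≤ h z) (h1 : ∀ z, h z ≤ 1) :
    Integrable (fun ω => h (X ω)) μ := by
  refine (integrable_const (1:ℝ)).mono' ((hc.measurable.comp hX).aestronglyMeasurable)
    (Filter.Eventually.of_forall fun ω => ?_)
  rw [Real.norm_eq_abs, abs_of_nonneg (h0 _)]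
  exact h1 _

lemma anti_step (Y : Ω → Fin p → ℝ) (C δ : ℝ) (hC : 0 < C) (hδ : 0 < δ)
    (hanti : ∀ z ε : ℝ, 0 < ε →
      μ {ω | |maxCoord (Y ω) - z| ≤ ε} ≤ ENNReal.ofReal (C * ε * Real.sqrt (Real.log p)))
    (t : ℝ) :
    (μ {ω | maxCoord (Y ω) ≤ t + δ}).toReal
      ≤ (μ {ω | maxCoord (Y ω) ≤ t}).toReal + C * δ * Real.sqrt (Real.log p) := by
  have hsub : {ω | maxCoord (Y ω) ≤ t + δ} ⊆
      {ω | maxCoord (Y ω) ≤ t} ∪ {ω | |maxCoord (Y ω) - (t + δ/2)| ≤ δ/2} := by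
    intro ω hω
    by_cases h : maxCoord (Y ω) ≤ t
    · exact Or.inl h
    · right
      simp only [Set.mem_setOf_eq] at hω ⊢
      rw [abs_le]; constructor <;> linarith
  have key : μ {ω | maxCoord (Y ω) ≤ t + δ} ≤
      μ {ω | maxCoord (Y ω) ≤ t} + ENNReal.ofReal (C * (δ/2) * Real.sqrt (Real.log p)) :=
    (measure_mono hsub).trans ((measure_union_le _ _).trans
      (add_le_add (le_refl _) (hanti (t + δ/2) (δ/2) (by linarith))))
  have hs : (0:ℝ) ≤ Real.sqrt (Real.log p) := Real.sqrt_nonneg _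
  have hfin : μ {ω | maxCoord (Y ω) ≤ t} + ENNReal.ofReal (C * (δ/2) * Real.sqrt (Real.log p)) ≠ ⊤ := by
    exact ENNReal.add_ne_top.2 ⟨measure_ne_top μ _, ENNReal.ofReal_ne_top⟩
  have := ENNReal.toReal_mono hfin key
  rw [ENNReal.toReal_add (measure_ne_top μ _) ENNReal.ofReal_ne_top,
    ENNReal.toReal_ofReal (by positivity)] at this
  nlinarith [this, mul_nonneg (mul_nonneg hC.le (half_pos hδ).le) hs]

end Aux

theorem stmt16 {Ω : Type*} [MeasurableSpace Ω] (μ : Measure Ω) [IsProbabilityMeasure μ]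
    {p : ℕ} [NeZero p] (hp : 2 ≤ p)
    (W Y : Ω → Fin p → ℝ) (hW : Measurable W) (hY : Measurable Y)
    (A B C β : ℝ) (hA : 0 ≤ A) (hB : 0 ≤ B) (hC : 0 < C) (hβ : 0 < β)
    (hsmooth : ∀ h : (Fin p → ℝ) → ℝ, ContDiff ℝ 3 h →
      (∀ z, ∑ r, ∑ s, |d2 h z r s| ≤ C * β ^ 2) →
      (∀ z, ∑ r, ∑ s, ∑ u, |d3 h z r s u| ≤ C * β ^ 3) →
      |(∫ ω, h (W ω) ∂μ) - ∫ ω, h (Y ω) ∂μ| ≤ A * β ^ 2 + B * β ^ 3)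
    (hanti : ∀ z ε : ℝ, 0 < ε →
      μ {ω | |maxCoord (Y ω) - z| ≤ ε} ≤ ENNReal.ofReal (C * ε * Real.sqrt (Real.log p)))
    (hsandwich : ∀ t : ℝ, ∃ h : (Fin p → ℝ) → ℝ, ContDiff ℝ 3 h ∧
      (∀ z, ∑ r, ∑ s, |d2 h z r s| ≤ C * β ^ 2) ∧
      (∀ z, ∑ r, ∑ s, ∑ u, |d3 h z r s u| ≤ C * β ^ 3) ∧
      (∀ z : Fin p → ℝ,
        Set.indicator {y : Fin p → ℝ | maxCoord y ≤ t} (fun _ => (1 : ℝ)) z ≤ h z) ∧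
      (∀ z : Fin p → ℝ,
        h z ≤ Set.indicator {y : Fin p → ℝ | maxCoord y ≤ t + (Real.log p + 1) / β}
          (fun _ => (1 : ℝ)) z)) :
    ∃ C' : ℝ, 0 < C' ∧ ∀ t : ℝ,
      |(μ {ω | maxCoord (W ω) ≤ t}).toReal - (μ {ω | maxCoord (Y ω) ≤ t}).toReal| ≤
        C' * (A * β ^ 2 + B * β ^ 3 + (Real.log p + 1) * Real.sqrt (Real.log p) / β) := by
  have hlogp : 0 < Real.log p :=
    Real.log_pos (by exact_mod_cast lt_of_lt_of_le one_lt_two (by exact_mod_cast hp))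
  set δ : ℝ := (Real.log p + 1) / β with hδdef
  have hδ : 0 < δ := div_pos (by linarith) hβ
  have hs : (0:ℝ) ≤ Real.sqrt (Real.log p) := Real.sqrt_nonneg _
  refine ⟨C + 1, by linarith, fun t => ?_⟩
  have hE : (0:ℝ) ≤ A * β ^ 2 + B * β ^ 3 := by positivity
  have hbounds : ∀ u (h : (Fin p → ℝ) → ℝ),
      (∀ z, Set.indicator {y : Fin p → ℝ | maxCoord y ≤ u} (fun _ => (1 : ℝ)) z ≤ h z) →
      (∀ z, h z ≤ Set.indicator {y : Fin p → ℝ | maxCoord y ≤ u + δ} (fun _ => (1 : ℝ)) z) →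
      (∀ z, 0 ≤ h z) ∧ (∀ z, h z ≤ 1) := by
    intro u h hlo hhi
    refine ⟨fun z => le_trans (Set.indicator_nonneg (fun _ _ => zero_le_one) z) (hlo z),
      fun z => le_trans (hhi z) ?_⟩
    by_cases hz : z ∈ {y : Fin p → ℝ | maxCoord y ≤ u + δ} <;> simp [hz]
  have upper : (μ {ω | maxCoord (W ω) ≤ t}).toReal ≤
      (μ {ω | maxCoord (Y ω) ≤ t}).toReal + (A * β ^ 2 + B * β ^ 3)
        + C * δ * Real.sqrt (Real.log p) := by
    obtain ⟨h, hc, hd2, hd3, hlo, hhi⟩ := hsandwich t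
    obtain ⟨h0, h1⟩ := hbounds t h hlo hhi
    have hint := h_integrable (μ := μ) W hW h hc.continuous h0 h1
    have hintY := h_integrable (μ := μ) Y hY h hc.continuous h0 h1
    have i1 : (μ {ω | maxCoord (W ω) ≤ t}).toReal ≤ ∫ ω, h (W ω) ∂μ := by
      rw [← indic_int W hW t]
      exact integral_mono (indic_integrable W hW t) hint (fun ω => hlo (W ω))
    have i2 : ∫ ω, h (W ω) ∂μ ≤ (∫ ω, h (Y ω) ∂μ) + (A * β ^ 2 + B * β ^ 3) := by
      have := abs_le.1 (hsmooth h hc hd2 hd3)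
      linarith [this.2]
    have i3 : ∫ ω, h (Y ω) ∂μ ≤ (μ {ω | maxCoord (Y ω) ≤ t + δ}).toReal := by
      rw [← indic_int Y hY (t + δ)]
      exact integral_mono hintY (indic_integrable Y hY (t + δ)) (fun ω => hhi (Y ω))
    have i4 := anti_step Y C δ hC hδ hanti t
    linarith
  have lower : (μ {ω | maxCoord (Y ω) ≤ t}).toReal - (A * β ^ 2 + B * β ^ 3)
        - C * δ * Real.sqrt (Real.log p) ≤ (μ {ω | maxCoord (W ω) ≤ t}).toReal := by
    obtain ⟨h, hc, hd2, hd3, hlo, hhi⟩ := hsandwich (t - δ)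
    rw [show t - δ + (Real.log p + 1) / β = t by rw [← hδdef]; ring] at hhi
    obtain ⟨h0, h1⟩ := hbounds (t - δ) h hlo
      (by rw [show t - δ + δ = t by ring]; exact hhi)
    have hint := h_integrable (μ := μ) W hW h hc.continuous h0 h1
    have hintY := h_integrable (μ := μ) Y hY h hc.continuous h0 h1
    have i1 : ∫ ω, h (W ω) ∂μ ≤ (μ {ω | maxCoord (W ω) ≤ t}).toReal := by
      rw [← indic_int W hW t]
      exact integral_mono hint (indic_integrable W hW t) (fun ω => hhi (W ω))
    have i2 : (∫ ω, h (Y ω) ∂μ) - (A * β ^ 2 + B * β ^ 3) ≤ ∫ ω, h (W ω) ∂μ := by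
      have := abs_le.1 (hsmooth h hc hd2 hd3)
      linarith [this.1]
    have i3 : (μ {ω | maxCoord (Y ω) ≤ t - δ}).toReal ≤ ∫ ω, h (Y ω) ∂μ := by
      rw [← indic_int Y hY (t - δ)]
      exact integral_mono (indic_integrable Y hY (t - δ)) hintY (fun ω => hlo (Y ω))
    have i4 : (μ {ω | maxCoord (Y ω) ≤ t}).toReal ≤
        (μ {ω | maxCoord (Y ω) ≤ t - δ}).toReal + C * δ * Real.sqrt (Real.log p) := by
      have := anti_step Y C δ hC hδ hanti (t - δ)
      rw [show t - δ + δ = t by ring] at this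
      exact this
    linarith
  have habs : |(μ {ω | maxCoord (W ω) ≤ t}).toReal - (μ {ω | maxCoord (Y ω) ≤ t}).toReal|
      ≤ (A * β ^ 2 + B * β ^ 3) + C * δ * Real.sqrt (Real.log p) := by
    rw [abs_le]; constructor <;> linarith
  have hrw : (Real.log p + 1) * Real.sqrt (Real.log p) / β = δ * Real.sqrt (Real.log p) := by
    rw [hδdef]; ring
  rw [hrw]
  have hδs : 0 ≤ δ * Real.sqrt (Real.log p) := mul_nonneg hδ.le hs
  nlinarith [habs, mul_nonneg hC.le hE, mul_nonneg hC.le hδs]
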